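/- Lower-half lifting characterization of homotopy retractions: with π : Ũ ⟶ U a universal map carrying a pre-Id-type structure equipped with a transport structure, E a π-fibrant object over B, f : E ⟶ Y over B, and g : Y ⟶ E a section of f, the map g is an Id-homotopy retraction of f (i.e., g∘f is Id-homotopic to id_E over B) if and only if g admits a family of lower-half lifts against π (for every pullback of π and commuting square with g on the left, there exists a diagonal making only the lower triangle commute, uniformly). -/

import Mathlib

open CategoryTheory CategoryTheory.Limits

/-- A map is a `π`-fibration if it arises as a pullback of the universal map `π`. -/
def IsPiFib {C : Type*} [Category C] {Ut U : C} (π : Ut ⟶ U) {E B : C} (p : E ⟶ B) : Prop :=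
  ∃ (c : B ⟶ U) (t : E ⟶ Ut), IsPullback t p π c


lemma IsPiFib.pullback_snd {C : Type*} [Category C] [HasFiniteLimits C]
    {Ut U : C} (π : Ut ⟶ U) {P Q E : C} {w : P ⟶ Q} (h : IsPiFib π w) (bot : E ⟶ Q) :
    IsPiFib π (pullback.snd w bot) := by
  obtain ⟨c, t, hpb⟩ := h
  exact ⟨bot ≫ c, pullback.fst w bot ≫ t,
    (IsPullback.of_hasPullback w bot).paste_horiz hpb⟩

/-- lower-half lifting characterization of homotopy retractions: with
`π : Ũ ⟶ U` a universal map carrying a pre-Id-type structure on the `π`-fibrant object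
`E` over `B` (a factorization `refl : E ⟶ Id_B(E)`, `ev_∂ : Id_B(E) ↠ E ×_B E` of the
diagonal with `ev_∂` a `π`-fibration) equipped with a transport structure (for every
`π`-fibration `w : X ⟶ E` there is a transport map `ev₀^*X ⟶ ev₁^*X` over `Id_B(E)`
restricting to the identity along `refl`), and with `f : E ⟶ Y` over `B` and
`g : Y ⟶ E` a strict section of `f`: the map `g` is an Id-homotopy retraction of `f`
(i.e. `g∘f` is Id-homotopic to `id_E` over `B`) if and only if `g` admits lower-half
lifts against `π`-fibrations (diagonals making only the lower triangle commute). -/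
theorem homotopy_retraction_iff_lower_half_lifts {C : Type*} [Category C] [HasFiniteLimits C]
    {Ut U : C} (π : Ut ⟶ U)
    {B E Y : C} (bE : E ⟶ B) (bY : Y ⟶ B)
    (f : E ⟶ Y) (g : Y ⟶ E)
    (hfB : f ≫ bY = bE) (hgB : g ≫ bE = bY) (hsec : g ≫ f = 𝟙 Y)
    (hEfib : IsPiFib π bE)
    (idE : C) (refl : E ⟶ idE) (evb : idE ⟶ pullback bE bE)
    (hfact : refl ≫ evb = pullback.lift (𝟙 E) (𝟙 E) rfl)
    (hevb : IsPiFib π evb)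
    (hTr : ∀ {X : C} (w : X ⟶ E), IsPiFib π w →
      ∃ t : pullback w (evb ≫ pullback.fst bE bE) ⟶ pullback w (evb ≫ pullback.snd bE bE),
        t ≫ pullback.snd w (evb ≫ pullback.snd bE bE) =
          pullback.snd w (evb ≫ pullback.fst bE bE) ∧
        pullback.lift (𝟙 X) (w ≫ refl) (by simp [reassoc_of% hfact, pullback.lift_fst, pullback.lift_snd]) ≫ t =
          pullback.lift (𝟙 X) (w ≫ refl) (by simp [reassoc_of% hfact, pullback.lift_fst, pullback.lift_snd])) :
    (∃ H : E ⟶ idE,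
        H ≫ evb = pullback.lift (f ≫ g) (𝟙 E)
          (by rw [Category.assoc, hgB, hfB, Category.id_comp])) ↔
      (∀ {P Q : C} (w : P ⟶ Q), IsPiFib π w →
        ∀ (top : Y ⟶ P) (bot : E ⟶ Q), top ≫ w = g ≫ bot →
          ∃ l : E ⟶ P, l ≫ w = bot) := by
  constructor
  · rintro ⟨H, hH⟩ P Q w hw top bot hcomm
    obtain ⟨t, ht1, ht2⟩ := hTr (pullback.snd w bot) (IsPiFib.pullback_snd π hw bot)
    have hs : (pullback.lift top g hcomm) ≫ pullback.snd w bot = g := pullback.lift_snd _ _ _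
    have he : (f ≫ pullback.lift top g hcomm) ≫ pullback.snd w bot =
        H ≫ (evb ≫ pullback.fst bE bE) := by
      rw [Category.assoc, hs, reassoc_of% hH]
      simp [pullback.lift_fst]
    refine ⟨pullback.lift (f ≫ pullback.lift top g hcomm) H he ≫ t ≫
      pullback.fst (pullback.snd w bot) (evb ≫ pullback.snd bE bE) ≫ pullback.fst w bot, ?_⟩
    have hsec' : (pullback.lift (f ≫ pullback.lift top g hcomm) H he ≫ t ≫
        pullback.fst (pullback.snd w bot) (evb ≫ pullback.snd bE bE)) ≫
        pullback.snd w bot = 𝟙 E := by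
      rw [Category.assoc, Category.assoc, pullback.condition, ← Category.assoc t, ht1]
      simp [reassoc_of% hH, pullback.lift_fst, pullback.lift_snd, pullback.lift_fst_assoc,
        pullback.lift_snd_assoc]
    calc (pullback.lift (f ≫ pullback.lift top g hcomm) H he ≫ t ≫
        pullback.fst (pullback.snd w bot) (evb ≫ pullback.snd bE bE) ≫
        pullback.fst w bot) ≫ w
        = (pullback.lift (f ≫ pullback.lift top g hcomm) H he ≫ t ≫
            pullback.fst (pullback.snd w bot) (evb ≫ pullback.snd bE bE)) ≫
            pullback.snd w bot ≫ bot := by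
          simp only [Category.assoc, pullback.condition]
      _ = bot := by rw [← Category.assoc, hsec', Category.id_comp]
  · intro h
    have hb : (g ≫ refl) ≫ evb = g ≫ pullback.lift (f ≫ g) (𝟙 E)
        (by rw [Category.assoc, hgB, hfB, Category.id_comp]) := by
      rw [Category.assoc, hfact]
      apply pullback.hom_ext <;> simp [reassoc_of% hsec, pullback.lift_fst, pullback.lift_snd]
    obtain ⟨l, hl⟩ := h evb hevb (g ≫ refl) _ hb
    exact ⟨l, hl⟩
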